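/- (Block sufficient decrease.) In the alternating-minimization setup, for every (n, u) ∈ E × F: H(n, u) − H(T¹_{η₁}(n, u), u) ≥ (1/(2η₁))‖G¹_{η₁}(n, u)‖², where T¹_{η₁}(n, u) = prox_{(1/η₁)g(·,u)}(n − (1/η₁)∇l₁(n)) and G¹_{η₁}(n, u) = η₁(n − T¹_{η₁}(n, u)); similarly H(n, u) − H(n, T²_{η₂}(n, u)) ≥ (1/(2η₂))‖G²_{η₂}(n, u)‖², where T²_{η₂}(n, u) = prox_{(1/η₂)g(n,·)}(u − (1/η₂)∇l₂(u)) and G²_{η₂}(n, u) = η₂(u − T²_{η₂}(n, u)). -/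

import Mathlib

open scoped RealInnerProductSpace

lemma descent_lemma' {E : Type*} [NormedAddCommGroup E] [InnerProductSpace ℝ E] [CompleteSpace E]
    (l : E → ℝ) (hdiff : Differentiable ℝ l) (L : ℝ)
    (hLip : ∀ a b : E, ‖gradient l a - gradient l b‖ ≤ L * ‖a - b‖) (a b : E) :
    l b ≤ l a + ⟪gradient l a, b - a⟫ + L / 2 * ‖b - a‖ ^ 2 := by
  set c : ℝ := ⟪gradient l a, b - a⟫ with hc
  set d : ℝ := ‖b - a‖ ^ 2 with hd
  set ψ : ℝ → ℝ := fun t => l (a + t • (b - a)) - t * c - L / 2 * t ^ 2 * d with hψ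
  have hder : ∀ t : ℝ, HasDerivAt ψ
      (⟪gradient l (a + t • (b - a)), b - a⟫ - c - L * t * d) t := by
    intro t
    have h1 : HasDerivAt (fun t : ℝ => a + t • (b - a)) (b - a) t := by
      simpa using ((hasDerivAt_id t).smul_const (b - a)).const_add a
    have h2 : HasGradientAt l (gradient l (a + t • (b - a))) (a + t • (b - a)) :=
      (hdiff _).hasGradientAt
    have h3 : HasDerivAt (fun t : ℝ => l (a + t • (b - a)))
        (⟪gradient l (a + t • (b - a)), b - a⟫) t := by
      have := h2.hasFDerivAt.comp_hasDerivAt t h1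
      simpa [Function.comp_def] using this
    have h4 : HasDerivAt (fun t : ℝ => t * c) c t := by
      simpa using (hasDerivAt_id t).mul_const c
    have h5 : HasDerivAt (fun t : ℝ => L / 2 * t ^ 2 * d) (L * t * d) t := by
      have := ((hasDerivAt_pow 2 t).const_mul (L / 2)).mul_const d
      exact this.congr_deriv (by ring)
    exact (h3.sub h4).sub h5
  have hanti : AntitoneOn ψ (Set.Icc (0:ℝ) 1) := by
    apply antitoneOn_of_deriv_nonpos (convex_Icc 0 1)
    · exact Continuous.continuousOn (by
        have : Continuous ψ := by
          apply Continuous.sub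
          apply Continuous.sub
          · exact hdiff.continuous.comp (by continuity)
          · continuity
          · continuity
        exact this)
    · intro t ht
      exact (hder t).differentiableAt.differentiableWithinAt
    · intro t ht
      rw [interior_Icc] at ht
      rw [(hder t).deriv]
      have hle : ⟪gradient l (a + t • (b - a)) - gradient l a, b - a⟫ ≤ L * t * d := by
        calc ⟪gradient l (a + t • (b - a)) - gradient l a, b - a⟫
            ≤ ‖gradient l (a + t • (b - a)) - gradient l a‖ * ‖b - a‖ := real_inner_le_norm _ _
          _ ≤ (L * ‖a + t • (b - a) - a‖) * ‖b - a‖ := by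
              apply mul_le_mul_of_nonneg_right (hLip _ _) (norm_nonneg _)
          _ = L * t * d := by
              rw [hd]
              simp [norm_smul, abs_of_pos ht.1]
              ring
      have := inner_sub_left (𝕜 := ℝ) (gradient l (a + t • (b - a))) (gradient l a) (b - a)
      rw [this] at hle
      linarith
  have := hanti (Set.mem_Icc.mpr ⟨le_refl 0, zero_le_one⟩) (Set.mem_Icc.mpr ⟨zero_le_one, le_refl 1⟩) zero_le_one
  simp only [hψ] at this
  simp only [zero_smul, add_zero, one_smul, add_sub_cancel] at this
  nlinarith [this]

lemma combo_norm_sq {E : Type*} [NormedAddCommGroup E] [InnerProductSpace ℝ E]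
    (t : ℝ) (p q : E) :
    ‖t • p + (1 - t) • q‖ ^ 2 = t * ‖p‖ ^ 2 + (1 - t) * ‖q‖ ^ 2 - t * (1 - t) * ‖p - q‖ ^ 2 := by
  simp only [← real_inner_self_eq_norm_sq]
  simp only [inner_add_add_self, inner_sub_sub_self, real_inner_smul_left, real_inner_smul_right,
    real_inner_comm p q]
  ring

lemma prox_strong {E : Type*} [NormedAddCommGroup E] [InnerProductSpace ℝ E]
    (φ : E → ℝ) (hφ : ConvexOn ℝ Set.univ φ) (η : ℝ) (hη : 0 < η) (z x : E)
    (hmin : ∀ w : E, φ x + η / 2 * ‖x - z‖ ^ 2 ≤ φ w + η / 2 * ‖w - z‖ ^ 2) (y : E) :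
    φ x + η / 2 * ‖x - z‖ ^ 2 + η / 2 * ‖y - x‖ ^ 2 ≤ φ y + η / 2 * ‖y - z‖ ^ 2 := by
  set C : ℝ := η / 2 * ‖y - x‖ ^ 2 with hC
  have hC0 : 0 ≤ C := by positivity
  have key : ∀ t : ℝ, 0 < t → t < 1 →
      φ x + η / 2 * ‖x - z‖ ^ 2 + (1 - t) * C ≤ φ y + η / 2 * ‖y - z‖ ^ 2 := by
    intro t ht0 ht1
    have hcomb := hφ.2 (Set.mem_univ y) (Set.mem_univ x) (le_of_lt ht0)
      (by linarith : (0:ℝ) ≤ 1 - t) (by ring)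
    simp only [smul_eq_mul] at hcomb
    have hmin' := hmin (t • y + (1 - t) • x)
    have hnorm : ‖t • y + (1 - t) • x - z‖ ^ 2
        = t * ‖y - z‖ ^ 2 + (1 - t) * ‖x - z‖ ^ 2 - t * (1 - t) * ‖y - x‖ ^ 2 := by
      have : t • y + (1 - t) • x - z = t • (y - z) + (1 - t) • (x - z) := by
        module
      rw [this, combo_norm_sq]
      congr 2
      rw [sub_sub_sub_cancel_right]
    rw [hnorm] at hmin'
    have h2 : φ x + η / 2 * ‖x - z‖ ^ 2
        ≤ t * φ y + (1 - t) * φ x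
          + η / 2 * (t * ‖y - z‖ ^ 2 + (1 - t) * ‖x - z‖ ^ 2 - t * (1 - t) * ‖y - x‖ ^ 2) :=
      le_trans hmin' (by linarith)
    have h3 : t * (φ x + η / 2 * ‖x - z‖ ^ 2 + (1 - t) * C)
        ≤ t * (φ y + η / 2 * ‖y - z‖ ^ 2) := by
      rw [hC]; nlinarith
    exact le_of_mul_le_mul_left h3 ht0
  apply le_of_forall_pos_le_add
  intro ε hε
  set t : ℝ := min (1/2) (ε / (C + 1)) with htdef
  have ht0 : 0 < t := lt_min (by norm_num) (by positivity)
  have ht1 : t < 1 := lt_of_le_of_lt (min_le_left _ _) (by norm_num)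
  have h := key t ht0 ht1
  have htC : t * C ≤ ε := by
    calc t * C ≤ (ε / (C + 1)) * C := by
          apply mul_le_mul_of_nonneg_right (min_le_right _ _) hC0
      _ ≤ ε := by
          rw [div_mul_eq_mul_div, div_le_iff₀ (by linarith)]
          nlinarith
  linarith

/-- One-block sufficient decrease, factored out. -/
lemma one_block_decrease {E : Type*} [NormedAddCommGroup E] [InnerProductSpace ℝ E]
    [CompleteSpace E]
    (φ : E → ℝ) (hφ : ConvexOn ℝ Set.univ φ)
    (l : E → ℝ) (hdiff : Differentiable ℝ l)
    (L : ℝ) (hL : 0 < L)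
    (hLip : ∀ a b : E, ‖gradient l a - gradient l b‖ ≤ L * ‖a - b‖)
    (η : ℝ) (hη : L ≤ η) (n T : E)
    (hT : ∀ y : E,
      φ T + η / 2 * ‖T - (n - (1 / η) • gradient l n)‖ ^ 2
        ≤ φ y + η / 2 * ‖y - (n - (1 / η) • gradient l n)‖ ^ 2) :
    (φ n + l n) - (φ T + l T) ≥ 1 / (2 * η) * ‖η • (n - T)‖ ^ 2 := by
  have hη0 : 0 < η := lt_of_lt_of_le hL hη
  set z : E := n - (1 / η) • gradient l n with hz
  have hstrong := prox_strong φ hφ η hη0 z T hT n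
  have hdesc := descent_lemma' l hdiff L hLip n T
  set c : ℝ := ⟪gradient l n, T - n⟫ with hcdef
  have hTz : ‖T - z‖ ^ 2 = ‖T - n‖ ^ 2 + 2 * ((1 / η) * c) + ‖n - z‖ ^ 2 := by
    have e1 : T - z = (T - n) + (1 / η) • (gradient l n) := by
      rw [hz]; module
    have e2 : n - z = (1 / η) • (gradient l n) := by
      rw [hz]; module
    rw [e1, e2, norm_add_sq_real, real_inner_smul_right]
    have : ⟪T - n, gradient l n⟫ = c := real_inner_comm _ _
    rw [this]
  have hinv : η * (1 / η) = 1 := mul_one_div_cancel hη0.ne'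
  have hnrev : ‖n - T‖ = ‖T - n‖ := norm_sub_rev n T
  have hsm : ‖η • (n - T)‖ ^ 2 = η ^ 2 * ‖n - T‖ ^ 2 := by
    rw [norm_smul, mul_pow, Real.norm_eq_abs, sq_abs]
  have hgoal : 1 / (2 * η) * ‖η • (n - T)‖ ^ 2 = η / 2 * ‖n - T‖ ^ 2 := by
    rw [hsm]; field_simp
  rw [ge_iff_le, hgoal]
  rw [hTz] at hstrong
  -- hstrong : φ T + η/2 * (‖T-n‖² + 2*((1/η)*c) + ‖n-z‖²) + η/2 * ‖n-T‖² ≤ φ n + η/2 * ‖n-z‖²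
  have hexp : η / 2 * (‖T - n‖ ^ 2 + 2 * (1 / η * c) + ‖n - z‖ ^ 2)
      = η / 2 * ‖T - n‖ ^ 2 + c + η / 2 * ‖n - z‖ ^ 2 := by
    field_simp
  rw [hexp] at hstrong
  have hkey : φ T + η / 2 * ‖T - n‖ ^ 2 + c + η / 2 * ‖n - T‖ ^ 2 ≤ φ n := by
    linarith
  nlinarith [hdesc, hkey, sq_nonneg ‖T - n‖, hnrev]

/-- Block sufficient decrease in the alternating-minimization setup: for every `(n, u)`,
`H(n, u) − H(T¹(n, u), u) ≥ (1/(2η₁))‖G¹(n, u)‖²` where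
`T¹(n, u) = prox_{(1/η₁)g(·,u)}(n − (1/η₁)∇l₁(n))` and `G¹(n, u) = η₁(n − T¹(n, u))`;
and similarly for the second block. -/
theorem block_sufficient_decrease
    {E : Type*} [NormedAddCommGroup E] [InnerProductSpace ℝ E] [CompleteSpace E]
    {F : Type*} [NormedAddCommGroup F] [InnerProductSpace ℝ F] [CompleteSpace F]
    (g : E × F → ℝ) (hg : ConvexOn ℝ Set.univ g)
    (l₁ : E → ℝ) (l₂ : F → ℝ)
    (hl₁conv : ConvexOn ℝ Set.univ l₁) (hl₂conv : ConvexOn ℝ Set.univ l₂)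
    (hl₁diff : Differentiable ℝ l₁) (hl₂diff : Differentiable ℝ l₂)
    (L₁ L₂ : ℝ) (hL₁ : 0 < L₁) (hL₂ : 0 < L₂)
    (hLip₁ : ∀ a b : E, ‖gradient l₁ a - gradient l₁ b‖ ≤ L₁ * ‖a - b‖)
    (hLip₂ : ∀ a b : F, ‖gradient l₂ a - gradient l₂ b‖ ≤ L₂ * ‖a - b‖)
    (η₁ η₂ : ℝ) (hη₁ : L₁ ≤ η₁) (hη₂ : L₂ ≤ η₂)
    (H : E × F → ℝ) (hH : ∀ p : E × F, H p = g p + l₁ p.1 + l₂ p.2)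
    (n : E) (u : F) (T1 : E) (T2 : F)
    (hT1 : ∀ y : E,
      g (T1, u) + η₁ / 2 * ‖T1 - (n - (1 / η₁) • gradient l₁ n)‖ ^ 2
        ≤ g (y, u) + η₁ / 2 * ‖y - (n - (1 / η₁) • gradient l₁ n)‖ ^ 2)
    (hT2 : ∀ w : F,
      g (n, T2) + η₂ / 2 * ‖T2 - (u - (1 / η₂) • gradient l₂ u)‖ ^ 2
        ≤ g (n, w) + η₂ / 2 * ‖w - (u - (1 / η₂) • gradient l₂ u)‖ ^ 2) :
    H (n, u) - H (T1, u) ≥ 1 / (2 * η₁) * ‖η₁ • (n - T1)‖ ^ 2 ∧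
    H (n, u) - H (n, T2) ≥ 1 / (2 * η₂) * ‖η₂ • (u - T2)‖ ^ 2 := by
  have hg1 : ConvexOn ℝ Set.univ (fun y : E => g (y, u)) := by
    refine ⟨convex_univ, ?_⟩
    intro x _ y _ a b ha hb hab
    have h := hg.2 (Set.mem_univ (x, u)) (Set.mem_univ (y, u)) ha hb hab
    have hcombo : a • ((x, u) : E × F) + b • (y, u) = (a • x + b • y, u) := by
      rw [Prod.smul_mk, Prod.smul_mk, Prod.mk_add_mk, Convex.combo_self hab]
    rw [hcombo] at h
    simpa using h
  have hg2 : ConvexOn ℝ Set.univ (fun w : F => g (n, w)) := by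
    refine ⟨convex_univ, ?_⟩
    intro x _ y _ a b ha hb hab
    have h := hg.2 (Set.mem_univ (n, x)) (Set.mem_univ (n, y)) ha hb hab
    have hcombo : a • ((n, x) : E × F) + b • (n, y) = (n, a • x + b • y) := by
      rw [Prod.smul_mk, Prod.smul_mk, Prod.mk_add_mk, Convex.combo_self hab]
    rw [hcombo] at h
    simpa using h
  have h1 := one_block_decrease (fun y : E => g (y, u)) hg1 l₁ hl₁diff L₁ hL₁ hLip₁ η₁ hη₁ n T1 hT1
  have h2 := one_block_decrease (fun w : F => g (n, w)) hg2 l₂ hl₂diff L₂ hL₂ hLip₂ η₂ hη₂ u T2 hT2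
  constructor
  · have := h1
    simp only [hH]
    linarith
  · have := h2
    simp only [hH]
    linarith
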